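/- The number of m-colored compositions of n is m * (m+1)^(n-1) for n ≥ 1. Formally, the set of pairs (α, c) where α is a composition of n (a list of positive integers summing to n) and c is a function assigning to each part of α one of m colors, has cardinality m * (m+1)^(n-1). -/

import Mathlib

namespace ColoredComp

variable {m : ℕ}

/-- Colored compositions as lists of (part, color) pairs. -/
abbrev T (m n : ℕ) : Type :=
  {l : List (ℕ × Fin m) // (∀ x ∈ l, 0 < x.1) ∧ (l.map Prod.fst).sum = n}

lemma part_le {l : List (ℕ × Fin m)} {n : ℕ} (h : (l.map Prod.fst).sum = n)
    {x : ℕ × Fin m} (hx : x ∈ l) : x.1 ≤ n := by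
  subst h
  exact List.single_le_sum (fun y _ => Nat.zero_le y) _ (List.mem_map_of_mem (f := Prod.fst) hx)

lemma length_le {l : List (ℕ × Fin m)} {n : ℕ} (hpos : ∀ x ∈ l, 0 < x.1)
    (h : (l.map Prod.fst).sum = n) : l.length ≤ n := by
  subst h
  calc l.length = (l.map Prod.fst).length := by simp
    _ ≤ (l.map Prod.fst).sum := by
        apply List.length_le_sum_of_one_le
        intro i hi
        obtain ⟨x, hx, rfl⟩ := List.mem_map.1 hi
        exact hpos x hx

instance (n : ℕ) : Finite (T m n) := by
  have hfin : Finite {l : List (Fin (n+1) × Fin m) // l.length ≤ n} :=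
    (List.finite_length_le (Fin (n+1) × Fin m) n).to_subtype
  refine Finite.of_injective
    (fun p : T m n =>
      (⟨p.1.attach.map (fun x => (⟨x.1.1, Nat.lt_succ_of_le (part_le p.2.2 x.2)⟩, x.1.2)),
        by simpa using length_le p.2.1 p.2.2⟩ :
        {l : List (Fin (n+1) × Fin m) // l.length ≤ n})) ?_
  intro p q hpq
  apply Subtype.ext
  have h1 := congrArg (fun l : {l : List (Fin (n+1) × Fin m) // l.length ≤ n} =>
    l.1.map (fun y => ((y.1 : ℕ), y.2))) hpq
  have e : ∀ (l : List (ℕ × Fin m)) (H : ∀ x : {x // x ∈ l}, x.1.1 < n + 1),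
      (List.map (fun y : Fin (n+1) × Fin m => ((y.1 : ℕ), y.2))
        (l.attach.map (fun x => ((⟨x.1.1, H x⟩ : Fin (n+1)), x.1.2)))) = l := by
    intro l H
    rw [List.map_map]
    exact List.attach_map_subtype_val l
  dsimp only at h1
  rw [e _ _, e _ _] at h1
  exact h1

lemma eq_single {l : List (ℕ × Fin m)} (hp : ∀ x ∈ l, 0 < x.1)
    (hs : (l.map Prod.fst).sum = 1) : ∃ c, l = [(1, c)] := by
  match l with
  | [] => simp at hs
  | (a, c) :: t =>
    simp only [List.map_cons, List.sum_cons] at hs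
    have ha : 0 < a := hp (a, c) (by simp)
    have ht : (t.map Prod.fst).sum = 0 := by omega
    have ha1 : a = 1 := by omega
    have htnil : t = [] := by
      cases t with
      | nil => rfl
      | cons b r =>
        have hb := hp b (by simp)
        simp only [List.map_cons, List.sum_cons] at ht
        omega
    exact ⟨c, by simp [ha1, htnil]⟩

lemma card_one : Nat.card (T m 1) = m := by
  have hbij : Function.Bijective (fun c : Fin m => (⟨[(1, c)], by simp, by simp⟩ : T m 1)) := by
    constructor
    · intro a b hab
      simpa [Subtype.ext_iff] using hab
    · rintro ⟨l, hp, hs⟩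
      obtain ⟨c, rfl⟩ := eq_single hp hs
      exact ⟨c, rfl⟩
  rw [← Nat.card_eq_of_bijective _ hbij, Nat.card_eq_fintype_card, Fintype.card_fin]

/-- Increase the first part by one. -/
def bump : List (ℕ × Fin m) → List (ℕ × Fin m)
  | [] => []
  | (a, c) :: t => (a + 1, c) :: t

def G (n : ℕ) : T m (n + 1) ⊕ (Fin m × T m (n + 1)) → T m (n + 2)
  | Sum.inl ⟨l, h⟩ =>
      ⟨bump l, by
        rcases l with _ | ⟨⟨a, c⟩, t⟩
        · exact absurd h.2 (by simp)
        · refine ⟨?_, ?_⟩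
          · intro x hx
            rcases List.mem_cons.1 hx with rfl | hx
            · simp
            · exact h.1 x (List.mem_cons_of_mem _ hx)
          · have := h.2
            simp only [bump, List.map_cons, List.sum_cons] at this ⊢
            omega⟩
  | Sum.inr (c, ⟨l, h⟩) =>
      ⟨(1, c) :: l, by
        refine ⟨?_, ?_⟩
        · intro x hx
          rcases List.mem_cons.1 hx with rfl | hx
          · simp
          · exact h.1 x hx
        · simp only [List.map_cons, List.sum_cons, h.2]
          omega⟩

lemma G_bijective (n : ℕ) : Function.Bijective (G (m := m) n) := by
  constructor
  · rintro (⟨l, h⟩ | ⟨c, l, h⟩) (⟨l', h'⟩ | ⟨c', l', h'⟩) heq <;>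
      simp only [G] at heq <;>
      replace heq := congrArg Subtype.val heq <;>
      simp only at heq
    · rcases l with _ | ⟨⟨a, b⟩, t⟩
      · exact absurd h.2 (by simp)
      rcases l' with _ | ⟨⟨a', b'⟩, t'⟩
      · exact absurd h'.2 (by simp)
      simp only [bump, List.cons.injEq, Prod.mk.injEq] at heq
      obtain ⟨⟨h1, h2⟩, h3⟩ := heq
      have ha : a = a' := by omega
      subst ha; subst h2; subst h3
      rfl
    · rcases l with _ | ⟨⟨a, b⟩, t⟩
      · exact absurd h.2 (by simp)
      have ha : 0 < a := h.1 (a, b) (by simp)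
      simp only [bump, List.cons.injEq, Prod.mk.injEq] at heq
      omega
    · rcases l' with _ | ⟨⟨a', b'⟩, t'⟩
      · exact absurd h'.2 (by simp)
      have ha : 0 < a' := h'.1 (a', b') (by simp)
      simp only [bump, List.cons.injEq, Prod.mk.injEq] at heq
      omega
    · simp only [List.cons.injEq, Prod.mk.injEq] at heq
      obtain ⟨⟨-, h2⟩, h3⟩ := heq
      subst h2; subst h3
      rfl
  · rintro ⟨l, hp, hs⟩
    rcases l with _ | ⟨⟨a, c⟩, t⟩
    · simp at hs
    have ha : 0 < a := hp (a, c) (by simp)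
    simp only [List.map_cons, List.sum_cons] at hs
    rcases Nat.lt_or_ge a 2 with h2 | h2
    · have ha1 : a = 1 := by omega
      subst ha1
      refine ⟨Sum.inr (c, ⟨t, fun x hx => hp x (List.mem_cons_of_mem _ hx), by omega⟩), ?_⟩
      simp [G]
    · obtain ⟨b, rfl⟩ : ∃ b, a = b + 2 := ⟨a - 2, by omega⟩
      refine ⟨Sum.inl ⟨(b + 1, c) :: t, ?_, ?_⟩, ?_⟩
      · intro x hx
        rcases List.mem_cons.1 hx with rfl | hx
        · simp
        · exact hp x (List.mem_cons_of_mem _ hx)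
      · simp only [List.map_cons, List.sum_cons]; omega
      · simp [G, bump]

lemma card_T (n : ℕ) : Nat.card (T m (n + 1)) = m * (m + 1) ^ n := by
  induction n with
  | zero => simpa using card_one
  | succ k ih =>
    have h1 : Nat.card (T m (k + 2)) =
        Nat.card (T m (k + 1) ⊕ (Fin m × T m (k + 1))) :=
      (Nat.card_eq_of_bijective _ (G_bijective k)).symm
    rw [h1, Nat.card_sum, Nat.card_prod, ih]
    have hfm : Nat.card (Fin m) = m := by simp
    rw [hfm, pow_succ]
    ring

end ColoredComp

namespace ColoredComp

variable {m : ℕ}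

def F (n : ℕ) :
    {p : Σ α : List ℕ, Fin α.length → Fin m // (∀ x ∈ p.1, 0 < x) ∧ p.1.sum = n} →
      T m n := fun p =>
  ⟨List.ofFn (fun i => (p.1.1.get i, p.1.2 i)), by
      intro x hx
      rw [List.mem_ofFn] at hx
      obtain ⟨i, rfl⟩ := hx
      exact p.2.1 _ (p.1.1.get_mem ..), by
      rw [List.map_ofFn]
      show (List.ofFn fun i => p.1.1.get i).sum = n
      rw [List.ofFn_get]
      exact p.2.2⟩

lemma F_bijective (n : ℕ) : Function.Bijective (F (m := m) n) := by
  constructor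
  · rintro ⟨⟨α, f⟩, hα⟩ ⟨⟨β, g⟩, hβ⟩ h
    replace h := congrArg Subtype.val h
    simp only [F] at h
    have hab : α = β := by
      have h2 := congrArg (List.map Prod.fst) h
      rw [List.map_ofFn, List.map_ofFn] at h2
      have e1 : List.ofFn (Prod.fst ∘ fun i => (α.get i, f i)) = α := List.ofFn_get α
      have e2 : List.ofFn (Prod.fst ∘ fun i => (β.get i, g i)) = β := List.ofFn_get β
      rw [e1, e2] at h2
      exact h2
    subst hab
    have hfg : f = g := by
      have h2 := List.ofFn_injective h
      funext i
      exact congrArg Prod.snd (congrFun h2 i)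
    subst hfg
    rfl
  · rintro ⟨l, hp, hs⟩
    refine ⟨⟨⟨l.map Prod.fst, fun i => (l.get (Fin.cast (by simp) i)).2⟩, ?_, ?_⟩, ?_⟩
    · intro x hx
      obtain ⟨y, hy, rfl⟩ := List.mem_map.1 hx
      exact hp y hy
    · exact hs
    · apply Subtype.ext
      simp only [F]
      apply List.ext_get
      · simp
      · intro i h1 h2
        simp [List.get_ofFn, List.getElem_map]

end ColoredComp

/-- The number of `m`-colored compositions of `n` is `m * (m+1)^(n-1)` for `n ≥ 1`:
pairs of a composition `α` of `n` (a list of positive integers summing to `n`)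
together with a function assigning one of `m` colors to each part. -/
theorem card_colored_compositions (n m : ℕ) (hn : 1 ≤ n) (hm : 1 ≤ m) :
    Nat.card {p : Σ α : List ℕ, Fin α.length → Fin m //
        (∀ x ∈ p.1, 0 < x) ∧ p.1.sum = n} = m * (m + 1) ^ (n - 1) := by
  obtain ⟨k, rfl⟩ : ∃ k, n = k + 1 := ⟨n - 1, by omega⟩
  rw [Nat.card_eq_of_bijective _ (ColoredComp.F_bijective (k + 1)), ColoredComp.card_T k]
  simp
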